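/- Let U be a real n × r matrix and V a real m × r matrix, both with orthonormal columns (Uᵀ U = Vᵀ V = I_r), S a real r × r matrix, and R := U S Vᵀ. Let ρ ∈ ℝⁿ satisfy (I − U Uᵀ) ρ ≠ 0; set s := ‖(I − U Uᵀ) ρ‖₂, q := (1/s)(I − U Uᵀ) ρ, and let K := [[S, Uᵀρ],[0, s]] be the (r+1) × (r+1) core matrix. Suppose K = U_c S_c V_cᵀ where U_c and V_c are orthogonal (r+1) × (r+1) matrices. Define Û := [U q] U_c and V̂ := [[V, 0],[0, 1]] V_c. Then Ûᵀ Û = I_{r+1}, V̂ᵀ V̂ = I_{r+1}, and [R ρ] = Û S_c V̂ᵀ; i.e., the incremental update produces an exact factorization with orthonormal left and right factors of the augmented snapshot matrix. -/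

import Mathlib

open Matrix BigOperators

/-- Correctness of the incremental SVD update (Brand 2006): given `R = U S Vᵀ` with
orthonormal `U`- and `V`-columns, `p = (I - U Uᵀ) ρ ≠ 0`, `s = ‖p‖₂`, `q = p / s`,
and an SVD `K = U_c S_c V_cᵀ` of the core matrix `K = [[S, Uᵀρ],[0, s]]` with
orthogonal `U_c`, `V_c`, the matrices `Û = [U q] U_c` and `V̂ = [[V,0],[0,1]] V_c`
have orthonormal columns and `[R ρ] = Û S_c V̂ᵀ`. -/
theorem incremental_svd_update_correct
    (n m r : ℕ)
    (U : Matrix (Fin n) (Fin r) ℝ) (hU : Uᵀ * U = 1)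
    (V : Matrix (Fin m) (Fin r) ℝ) (hV : Vᵀ * V = 1)
    (S : Matrix (Fin r) (Fin r) ℝ)
    (R : Matrix (Fin n) (Fin m) ℝ) (hR : R = U * S * Vᵀ)
    (ρ : Fin n → ℝ)
    (p : Fin n → ℝ) (hp : p = (1 - U * Uᵀ).mulVec ρ) (hp0 : p ≠ 0)
    (s : ℝ) (hs : s = Real.sqrt (∑ i, p i ^ 2))
    (q : Fin n → ℝ) (hq : q = s⁻¹ • p)
    (K : Matrix (Fin r ⊕ Fin 1) (Fin r ⊕ Fin 1) ℝ)
    (hK : K = Matrix.fromBlocks S (Matrix.of fun i (_ : Fin 1) => Uᵀ.mulVec ρ i)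
      0 (Matrix.of fun (_ : Fin 1) (_ : Fin 1) => s))
    (Uc Sc Vc : Matrix (Fin r ⊕ Fin 1) (Fin r ⊕ Fin 1) ℝ)
    (hUc : Ucᵀ * Uc = 1) (hVc : Vcᵀ * Vc = 1)
    (hKsvd : K = Uc * Sc * Vcᵀ)
    (Uhat : Matrix (Fin n) (Fin r ⊕ Fin 1) ℝ)
    (hUhat : Uhat = (Matrix.of fun i => Sum.elim (U i) (fun _ : Fin 1 => q i)) * Uc)
    (Vhat : Matrix (Fin m ⊕ Fin 1) (Fin r ⊕ Fin 1) ℝ)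
    (hVhat : Vhat = Matrix.fromBlocks V 0 0 1 * Vc) :
    Uhatᵀ * Uhat = 1 ∧ Vhatᵀ * Vhat = 1 ∧
      (Matrix.of fun i => Sum.elim (R i) (fun _ : Fin 1 => ρ i)) = Uhat * Sc * Vhatᵀ := by
  -- auxiliary matrices
  set C : Matrix (Fin n) (Fin 1) ℝ := Matrix.of fun i (_ : Fin 1) => q i with hC
  have hW : (Matrix.of fun i => Sum.elim (U i) (fun _ : Fin 1 => q i))
      = Matrix.fromCols U C := rfl
  set B : Matrix (Fin m ⊕ Fin 1) (Fin r ⊕ Fin 1) ℝ := Matrix.fromBlocks V 0 0 1 with hB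
  -- scalar facts
  have hsum_nonneg : (0:ℝ) ≤ ∑ i, p i ^ 2 := Finset.sum_nonneg fun i _ => sq_nonneg _
  have hsum_pos : (0:ℝ) < ∑ i, p i ^ 2 := by
    rcases lt_or_eq_of_le hsum_nonneg with h | h
    · exact h
    · exfalso
      apply hp0
      funext i
      have := (Finset.sum_eq_zero_iff_of_nonneg
        (fun i _ => sq_nonneg (p i))).mp h.symm i (Finset.mem_univ i)
      exact pow_eq_zero_iff (n := 2) (by norm_num) |>.mp this
  have hs0 : s ≠ 0 := by
    rw [hs]
    exact (Real.sqrt_ne_zero'.mpr hsum_pos)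
  have hs2 : s ^ 2 = ∑ i, p i ^ 2 := by
    rw [hs]; exact Real.sq_sqrt hsum_nonneg
  -- Uᵀ p = 0
  have hUp : Uᵀ.mulVec p = 0 := by
    have h1 : Uᵀ * (1 - U * Uᵀ) = 0 := by
      rw [Matrix.mul_sub, Matrix.mul_one, ← Matrix.mul_assoc, hU, Matrix.one_mul, sub_self]
    rw [hp, Matrix.mulVec_mulVec, h1, Matrix.zero_mulVec]
  -- block orthogonality facts
  have hUtC : Uᵀ * C = 0 := by
    ext i j
    have h := congrFun hUp i
    simp only [Matrix.mulVec, dotProduct, Pi.zero_apply] at h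
    simp only [Matrix.mul_apply, hC, Matrix.of_apply, hq, Pi.smul_apply, smul_eq_mul,
      Matrix.zero_apply]
    calc ∑ k, Uᵀ i k * (s⁻¹ * p k) = s⁻¹ * ∑ k, Uᵀ i k * p k := by
          rw [Finset.mul_sum]; congr 1; funext k; ring
      _ = 0 := by rw [h, mul_zero]
  have hCtU : Cᵀ * U = 0 := by
    have := congrArg Matrix.transpose hUtC
    simpa [Matrix.transpose_mul] using this
  have hCtC : Cᵀ * C = 1 := by
    ext i j
    simp only [Matrix.mul_apply, Matrix.transpose_apply, hC, Matrix.of_apply, hq,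
      Pi.smul_apply, smul_eq_mul, Matrix.one_apply]
    have hij : i = j := Subsingleton.elim i j
    rw [if_pos hij]
    calc ∑ k, s⁻¹ * p k * (s⁻¹ * p k) = s⁻¹ * s⁻¹ * ∑ k, p k ^ 2 := by
          rw [Finset.mul_sum]; congr 1; funext k; ring
      _ = s⁻¹ * s⁻¹ * s ^ 2 := by rw [hs2]
      _ = 1 := by rw [pow_two]; field_simp
  have hWtW : (Matrix.fromCols U C)ᵀ * Matrix.fromCols U C = 1 := by
    rw [Matrix.transpose_fromCols, Matrix.fromRows_mul_fromCols, hU, hUtC, hCtU, hCtC,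
      Matrix.fromBlocks_one]
  -- goal 1
  have goal1 : Uhatᵀ * Uhat = 1 := by
    rw [hUhat, hW, Matrix.transpose_mul]
    calc Ucᵀ * (Matrix.fromCols U C)ᵀ * (Matrix.fromCols U C * Uc)
        = Ucᵀ * ((Matrix.fromCols U C)ᵀ * Matrix.fromCols U C) * Uc := by
          rw [Matrix.mul_assoc, Matrix.mul_assoc, Matrix.mul_assoc]
      _ = 1 := by rw [hWtW, Matrix.mul_one, hUc]
  -- goal 2
  have hBtB : Bᵀ * B = 1 := by
    rw [hB, Matrix.fromBlocks_transpose, Matrix.fromBlocks_multiply]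
    simp [hV, Matrix.fromBlocks_one]
  have goal2 : Vhatᵀ * Vhat = 1 := by
    rw [show Vhat = B * Vc from hVhat, Matrix.transpose_mul]
    calc Vcᵀ * Bᵀ * (B * Vc) = Vcᵀ * (Bᵀ * B) * Vc := by
          rw [Matrix.mul_assoc, Matrix.mul_assoc, Matrix.mul_assoc]
      _ = 1 := by rw [hBtB, Matrix.mul_one, hVc]
  -- goal 3
  have hWK : Matrix.fromCols U C * K
      = Matrix.fromCols (U * S) (Matrix.of fun i (_ : Fin 1) => ρ i) := by
    rw [hK, Matrix.fromCols_mul_fromBlocks]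
    refine (Matrix.fromCols_ext_iff _ _ _ _).mpr ⟨by simp, ?_⟩
    · ext i j
      have hpρ : p i = ρ i - (U * Uᵀ).mulVec ρ i := by
        rw [hp, Matrix.sub_mulVec, Matrix.one_mulVec]; simp
      simp only [Matrix.add_apply, Matrix.mul_apply, Matrix.of_apply, hC, hq,
        Pi.smul_apply, smul_eq_mul]
      have h1 : ∑ k, U i k * Uᵀ.mulVec ρ k = (U * Uᵀ).mulVec ρ i := by
        simp only [Matrix.mulVec, dotProduct, Matrix.mul_apply,
          Matrix.transpose_apply, Finset.mul_sum]
        rw [Finset.sum_comm]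
        refine Finset.sum_congr rfl fun x _ => ?_
        rw [Finset.sum_mul]
        exact Finset.sum_congr rfl fun k _ => by ring
      have h2 : ∑ _k : Fin 1, s⁻¹ * p i * s = p i := by
        simp [mul_comm, mul_assoc]
        field_simp
      rw [h1, h2, hpρ]
      ring
  have goal3 : (Matrix.of fun i => Sum.elim (R i) (fun _ : Fin 1 => ρ i))
      = Uhat * Sc * Vhatᵀ := by
    have hrhs : Uhat * Sc * Vhatᵀ = Matrix.fromCols U C * K * Bᵀ := by
      rw [hUhat, show Vhat = B * Vc from hVhat, hW, hKsvd, Matrix.transpose_mul]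
      simp only [Matrix.mul_assoc]
    rw [hrhs, hWK, hB, Matrix.fromBlocks_transpose, Matrix.fromCols_mul_fromBlocks]
    have : (Matrix.of fun i => Sum.elim (R i) (fun _ : Fin 1 => ρ i))
        = Matrix.fromCols R (Matrix.of fun i (_ : Fin 1) => ρ i) := rfl
    rw [this]
    exact (Matrix.fromCols_ext_iff _ _ _ _).mpr ⟨by simp [hR], by simp⟩
  exact ⟨goal1, goal2, goal3⟩
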